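/- For any vector v ∈ ℂⁿ and any ε ∈ (0,1), the (1,ε²)-support size of v is at least the (2,ε)-support size of v: |supp¹_{ε²}(v)| ≥ |supp²_ε(v)|. -/
import Mathlib


open Finset

/-- The `(1,δ)`-support size of `v`: the minimum cardinality of a set `T` of coordinates
such that `‖v[Tᶜ]‖₁ ≤ δ‖v‖₁`. -/
noncomputable def suppSize1 {n : ℕ} (δ : ℝ) (v : Fin n → ℂ) : ℕ :=
  sInf {s : ℕ | ∃ T : Finset (Fin n), T.card = s ∧
    ∑ i ∈ Tᶜ, ‖v i‖ ≤ δ * ∑ i, ‖v i‖}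

/-- The `(2,δ)`-support size of `v`: the minimum cardinality of a set `T` of coordinates
such that `‖v[Tᶜ]‖₂ ≤ δ‖v‖₂`. -/
noncomputable def suppSize2 {n : ℕ} (δ : ℝ) (v : Fin n → ℂ) : ℕ :=
  sInf {s : ℕ | ∃ T : Finset (Fin n), T.card = s ∧
    Real.sqrt (∑ i ∈ Tᶜ, ‖v i‖ ^ 2) ≤ δ * Real.sqrt (∑ i, ‖v i‖ ^ 2)}

lemma key_lemma {n : ℕ} (f : Fin n → ℝ) (hf : ∀ i, 0 ≤ f i) (ε : ℝ)
    (hε0 : 0 < ε) (hε1 : ε < 1) (T : Finset (Fin n))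
    (hT : ∑ i ∈ Tᶜ, f i ≤ ε ^ 2 * ∑ i, f i) :
    ∃ S : Finset (Fin n), S.card = T.card ∧
      Real.sqrt (∑ i ∈ Sᶜ, f i ^ 2) ≤ ε * Real.sqrt (∑ i, f i ^ 2) := by
  rcases Nat.eq_zero_or_pos T.card with h0 | hpos
  · have hTe : T = ∅ := card_eq_zero.mp h0
    subst hTe
    have h1 : ∑ i, f i ≤ ε ^ 2 * ∑ i, f i := by simpa using hT
    have hnn : 0 ≤ ∑ i, f i := Finset.sum_nonneg (fun i _ => hf i)
    have hε2 : ε ^ 2 < 1 := by nlinarith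
    have hs0 : ∑ i, f i = 0 := by nlinarith
    have hfi : ∀ i, f i = 0 := fun i =>
      le_antisymm (hs0 ▸ Finset.single_le_sum (fun j _ => hf j) (mem_univ i)) (hf i)
    refine ⟨∅, rfl, ?_⟩
    simp [hfi]
  · -- main case: pick S maximizing the ℓ1 mass among sets of card T.card
    obtain ⟨S, hSmem, hSmax⟩ := Finset.exists_max_image
      (Finset.powersetCard T.card (univ : Finset (Fin n))) (fun s => ∑ i ∈ s, f i)
      ⟨T, by simp [mem_powersetCard]⟩
    rw [mem_powersetCard] at hSmem
    have hScard : S.card = T.card := hSmem.2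
    have hTmem : T ∈ Finset.powersetCard T.card (univ : Finset (Fin n)) := by
      simp [mem_powersetCard]
    have hmax := hSmax T hTmem
    -- sum over Sᶜ ≤ sum over Tᶜ
    have htot : ∀ (U : Finset (Fin n)), ∑ i ∈ U, f i + ∑ i ∈ Uᶜ, f i = ∑ i, f i :=
      fun U => Finset.sum_add_sum_compl U f
    have hSc : ∑ i ∈ Sᶜ, f i ≤ ε ^ 2 * ∑ i, f i := by
      have := htot S; have := htot T; linarith
    -- S is nonempty
    have hSne : S.Nonempty := card_pos.mp (hScard ▸ hpos)
    -- min element i₀ of S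
    obtain ⟨i₀, hi₀S, hi₀min⟩ := Finset.exists_min_image S f hSne
    set a := f i₀ with ha
    -- every j ∉ S has f j ≤ a
    have hout : ∀ j ∈ Sᶜ, f j ≤ a := by
      intro j hj
      rw [mem_compl] at hj
      by_contra hlt
      push_neg at hlt
      -- swap: S' = insert j (S.erase i₀)
      have hjne : j ∉ S.erase i₀ := fun h => hj (mem_of_mem_erase h)
      have hS' : insert j (S.erase i₀) ∈ Finset.powersetCard T.card (univ : Finset (Fin n)) := by
        rw [mem_powersetCard]
        refine ⟨subset_univ _, ?_⟩
        rw [card_insert_of_notMem hjne, card_erase_of_mem hi₀S, hScard]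
        omega
      have hsum : ∑ i ∈ insert j (S.erase i₀), f i = f j + (∑ i ∈ S, f i - a) := by
        rw [Finset.sum_insert hjne, Finset.sum_erase_eq_sub hi₀S]
      have := hSmax _ hS'
      simp only [hsum] at this
      linarith
    have hin : ∀ i ∈ S, a ≤ f i := hi₀min
    have ha0 : 0 ≤ a := hf i₀
    -- key inequalities
    have A1 : ∑ i ∈ Sᶜ, f i ^ 2 ≤ a * ∑ i ∈ Sᶜ, f i := by
      rw [Finset.mul_sum]
      refine Finset.sum_le_sum fun j hj => ?_
      have := hout j hj
      nlinarith [hf j]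
    have A2 : a * ∑ i ∈ S, f i ≤ ∑ i ∈ S, f i ^ 2 := by
      rw [Finset.mul_sum]
      refine Finset.sum_le_sum fun i hi => ?_
      have := hin i hi
      nlinarith [hf i]
    have hl1 : (1 - ε ^ 2) * ∑ i ∈ Sᶜ, f i ≤ ε ^ 2 * ∑ i ∈ S, f i := by
      have := htot S; nlinarith
    have hcnn : 0 ≤ ∑ i ∈ Sᶜ, f i := Finset.sum_nonneg fun i _ => hf i
    have hε2 : ε ^ 2 < 1 := by nlinarith
    have hkey : (1 - ε ^ 2) * ∑ i ∈ Sᶜ, f i ^ 2 ≤ ε ^ 2 * ∑ i ∈ S, f i ^ 2 := by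
      have h1 : (1 - ε ^ 2) * ∑ i ∈ Sᶜ, f i ^ 2 ≤ (1 - ε ^ 2) * (a * ∑ i ∈ Sᶜ, f i) :=
        mul_le_mul_of_nonneg_left A1 (by linarith)
      have h2 : a * ((1 - ε ^ 2) * ∑ i ∈ Sᶜ, f i) ≤ a * (ε ^ 2 * ∑ i ∈ S, f i) :=
        mul_le_mul_of_nonneg_left hl1 ha0
      have h3 : ε ^ 2 * (a * ∑ i ∈ S, f i) ≤ ε ^ 2 * ∑ i ∈ S, f i ^ 2 :=
        mul_le_mul_of_nonneg_left A2 (by positivity)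
      have e1 : (1 - ε ^ 2) * (a * ∑ i ∈ Sᶜ, f i) = a * ((1 - ε ^ 2) * ∑ i ∈ Sᶜ, f i) := by ring
      have e2 : a * (ε ^ 2 * ∑ i ∈ S, f i) = ε ^ 2 * (a * ∑ i ∈ S, f i) := by ring
      linarith
    have htot2 : ∑ i ∈ S, f i ^ 2 + ∑ i ∈ Sᶜ, f i ^ 2 = ∑ i, f i ^ 2 :=
      Finset.sum_add_sum_compl S _
    have hfinal : ∑ i ∈ Sᶜ, f i ^ 2 ≤ ε ^ 2 * ∑ i, f i ^ 2 := by nlinarith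
    refine ⟨S, hScard, ?_⟩
    have := Real.sqrt_le_sqrt hfinal
    calc Real.sqrt (∑ i ∈ Sᶜ, f i ^ 2) ≤ Real.sqrt (ε ^ 2 * ∑ i, f i ^ 2) := this
      _ = ε * Real.sqrt (∑ i, f i ^ 2) := by
          rw [Real.sqrt_mul (by positivity), Real.sqrt_sq hε0.le]

/-- For any `v ∈ ℂⁿ` and `ε ∈ (0,1)`, `|supp¹_{ε²}(v)| ≥ |supp²_ε(v)|`. -/
theorem one_supp_ge_two_supp (n : ℕ) (v : Fin n → ℂ)
    (ε : ℝ) (hε : ε ∈ Set.Ioo (0 : ℝ) 1) :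
    suppSize2 ε v ≤ suppSize1 (ε ^ 2) v := by
  obtain ⟨hε0, hε1⟩ := hε
  set A := {s : ℕ | ∃ T : Finset (Fin n), T.card = s ∧
    ∑ i ∈ Tᶜ, ‖v i‖ ≤ ε ^ 2 * ∑ i, ‖v i‖} with hA
  have hAne : A.Nonempty := by
    refine ⟨n, univ, by simp, ?_⟩
    simp
    positivity
  have hmem : suppSize1 (ε ^ 2) v ∈ A := Nat.sInf_mem hAne
  obtain ⟨T, hTcard, hT⟩ := hmem
  obtain ⟨S, hScard, hS⟩ := key_lemma (fun i => ‖v i‖) (fun i => norm_nonneg _) ε hε0 hε1 T hT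
  exact Nat.sInf_le ⟨S, hScard.trans hTcard, hS⟩
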